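/- With I_n and S_n as defined (I_n(f) = t^n f(1/t), S_n(f) = (I_n(f)-f)/(t-1)), for any polynomial f of degree at most n one has S_n(S_n(f)) = S_n(f), I_n(S_{n+1}(f)) = S_{n+1}(f), and S_{n+1}(S_n(f)) = (1+t)·S_n(f). -/

import Mathlib

open Polynomial

/-- `Spoly n f = (Iₙ(f) - f)/(t-1)` where `Iₙ(f)(t) = tⁿ f(1/t)` is the reversal. -/
noncomputable def Spoly {R : Type*} [CommRing R] (n : ℕ) (f : R[X]) : R[X] :=
  (reflect n f - f) /ₘ (X - C 1)

section Aux

variable {R : Type*} [CommRing R]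

lemma reflect_reflect' (N : ℕ) (f : R[X]) : reflect N (reflect N f) = f := by
  ext i
  simp [coeff_reflect, revAt_invol]

lemma natDegree_reflect_le' {N : ℕ} {f : R[X]} (hf : f.natDegree ≤ N) :
    (reflect N f).natDegree ≤ N := by
  rw [natDegree_le_iff_coeff_eq_zero]
  intro m hm
  rw [coeff_reflect]
  have hrev : revAt N m = m := by
    show revAtFun N m = m
    simp [Function.Embedding.coeFn_mk, revAtFun, if_neg (not_le.2 hm)]
  rw [hrev]
  exact coeff_eq_zero_of_natDegree_lt (lt_of_le_of_lt hf hm)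

lemma eval_one_reflect' {N : ℕ} {f : R[X]} (hf : f.natDegree ≤ N) :
    eval 1 (reflect N f) = eval 1 f := by
  haveI : Invertible (1 : R) := invertibleOne
  have h := eval₂_reflect_mul_pow (RingHom.id R) (1 : R) N f hf
  simp only [invOf_one, one_pow, mul_one] at h
  exact h

lemma Spoly_key {n : ℕ} {f : R[X]} (hf : f.natDegree ≤ n) :
    (X - C 1) * Spoly n f = reflect n f - f := by
  rw [Spoly, mul_divByMonic_eq_iff_isRoot]
  simp [IsRoot, eval_one_reflect' hf]

lemma reflect_add_one {m : ℕ} {p : R[X]} (hp : p.natDegree ≤ m) :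
    reflect (m + 1) p = X * reflect m p := by
  have h1 : reflect (1 + m) (X * reflect m p) = p := by
    rw [reflect_mul X (reflect m p) (natDegree_X_le) (natDegree_reflect_le' hp),
      reflect_one_X, one_mul, reflect_reflect']
  calc reflect (m + 1) p = reflect (1 + m) p := by rw [add_comm]
    _ = reflect (1 + m) (reflect (1 + m) (X * reflect m p)) := by rw [h1]
    _ = X * reflect m p := reflect_reflect' _ _

/-- Core: the `S`-transform is palindromic, with degree bound. -/
lemma Spoly_core {n : ℕ} {f : R[X]} (hf : f.natDegree ≤ n + 1) :
    reflect n (Spoly (n + 1) f) = Spoly (n + 1) f ∧ (Spoly (n + 1) f).natDegree ≤ n := by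
  rcases subsingleton_or_nontrivial R with hR | hR
  · constructor
    · exact Subsingleton.elim _ _
    · rw [Subsingleton.elim (Spoly (n + 1) f) 0, natDegree_zero]; omega
  set g := Spoly (n + 1) f with hg
  have h1 : (X - C 1) * g = reflect (n + 1) f - f := Spoly_key hf
  have hdegh : (reflect (n + 1) f - f).natDegree ≤ n + 1 :=
    le_trans (natDegree_sub_le _ _)
      (max_le (natDegree_reflect_le' hf) hf)
  by_cases hg0 : g = 0
  · simp [hg0]
  have hdegg : g.natDegree ≤ n := by
    have hmul : ((X - C 1) * g).natDegree = 1 + g.natDegree := by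
      rw [natDegree_mul' (by
        rw [(monic_X_sub_C (1 : R)).leadingCoeff, one_mul]
        exact leadingCoeff_ne_zero.mpr hg0), natDegree_X_sub_C]
    have := h1 ▸ hmul
    omega
  refine ⟨?_, hdegg⟩
  have hreg : IsLeftRegular (X - C (1 : R)) := (monic_X_sub_C (1 : R)).isRegular.left
  apply hreg
  have h2 : reflect (n + 1) ((X - C 1) * g) = -((X - C 1) * g) := by
    rw [h1, reflect_sub, reflect_reflect']
    ring
  have h3 : reflect (n + 1) ((X - C 1) * g) = (1 - X) * reflect n g := by
    have hX1 : (X - C (1 : R)).natDegree ≤ 1 :=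
      le_trans (natDegree_sub_le _ _) (max_le natDegree_X_le (by simp))
    have := reflect_mul (X - C (1 : R)) g (F := 1) (G := n) hX1 hdegg
    rw [show (1 : ℕ) + n = n + 1 from by omega] at this
    rw [this, reflect_sub, reflect_one_X, reflect_C, pow_one, map_one, one_mul]
  have h4 : (1 - X) * reflect n g = -((X - C 1) * g) := h3 ▸ h2
  have h5 : -((X - C 1) * reflect n g) = -((X - C 1) * g) := by
    rw [← h4, map_one]; ring
  exact neg_injective h5

end Aux

theorem stmt1 {R : Type*} [CommRing R] (n : ℕ) (f : R[X]) (hf : f.natDegree ≤ n) :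
    Spoly n (Spoly n f) = Spoly n f ∧
    reflect n (Spoly (n + 1) f) = Spoly (n + 1) f ∧
    Spoly (n + 1) (Spoly n f) = (1 + X) * Spoly n f := by
  have hpal := (Spoly_core (f := f) (n := n) (le_trans hf (Nat.le_succ n))).1
  rcases n with _ | m
  · -- n = 0 : f is a constant, reflect 0 f = f, so Spoly 0 f = 0
    have h0 : reflect 0 f = f := by
      ext i
      rcases Nat.eq_zero_or_pos i with rfl | hi
      · simp [coeff_reflect]
      · have hrev : revAt 0 i = i := by
          show revAtFun 0 i = i
          unfold revAtFun
          rw [if_neg (not_le.2 hi)]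
        rw [coeff_reflect, hrev]
    have hS0 : Spoly 0 f = 0 := by rw [Spoly, h0, sub_self, zero_divByMonic]
    have hz : ∀ k : ℕ, Spoly k (0 : R[X]) = 0 := fun k => by
      simp [Spoly, zero_divByMonic]
    refine ⟨?_, hpal, ?_⟩ <;> rw [hS0] <;> simp [hz]
  · -- n = m + 1
    set g := Spoly (m + 1) f with hg
    obtain ⟨hrefl, hdeg⟩ := Spoly_core (f := f) (n := m) hf
    refine ⟨?_, hpal, ?_⟩
    · -- Spoly (m+1) g = g
      have hrg : reflect (m + 1) g = X * g := by rw [reflect_add_one hdeg, hrefl]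
      rw [Spoly, hrg, show X * g - g = (X - C 1) * g by rw [map_one]; ring,
        mul_divByMonic_cancel_left _ (monic_X_sub_C 1)]
    · -- Spoly (m+2) g = (1+X) * g
      have hrg : reflect (m + 1 + 1) g = X * (X * g) := by
        rw [reflect_add_one (le_trans hdeg (Nat.le_succ m)), reflect_add_one hdeg, hrefl]
      rw [Spoly, hrg, show X * (X * g) - g = (X - C 1) * ((1 + X) * g) by rw [map_one]; ring,
        mul_divByMonic_cancel_left _ (monic_X_sub_C 1)]
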